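/- Let D be a derivation in the Reluplex calculus starting from a derivation tree D_0 consisting of a single node s_0 = ⟨B_0, T_0, l_0, u_0, α_0, R_0⟩ (with α_0 ≡ 0). Then for every derivation tree D_i appearing in D and every non-distinguished node s = ⟨B, T, l, u, α, R⟩ appearing in D_i: (i) a real-valued assignment of the variables satisfies all equations of T_0 if and only if it satisfies all equations of T; and (ii) the assignment α of node s satisfies all equations of T. -/

import Mathlib

open scoped Classical

/-- A (non-distinguished) Reluplex configuration over the variable set `V`:
basic variables, tableau coefficients, lower/upper bounds (possibly infinite),
current assignment, and the set of ReLU pairs. -/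
structure Config (V : Type*) where
  basic : Finset V
  T : V → V → ℝ
  l : V → EReal
  u : V → EReal
  α : V → ℝ
  R : Finset (V × V)

namespace Config

variable {V : Type*} [Fintype V] [DecidableEq V]

/-- The right-hand side `Σ_{j ∉ basic} T i j * β j` of the tableau row of `i`. -/
noncomputable def rowSum (c : Config V) (i : V) (β : V → ℝ) : ℝ :=
  ∑ j ∈ Finset.univ.filter (fun j => j ∉ c.basic), c.T i j * β j

/-- An assignment `β` satisfies all equations of the tableau of `c`. -/
def SatTab (c : Config V) (β : V → ℝ) : Prop :=
  ∀ i ∈ c.basic, β i = c.rowSum i β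

/-- An assignment `β` respects all the lower and upper bounds of `c`. -/
def InBounds (c : Config V) (β : V → ℝ) : Prop :=
  ∀ x, c.l x ≤ (β x : EReal) ∧ (β x : EReal) ≤ c.u x

/-- `slack⁺(x_i)`. -/
def slackPos (c : Config V) (i : V) : Set V :=
  { j | j ∉ c.basic ∧
      ((0 < c.T i j ∧ (c.α j : EReal) < c.u j) ∨ (c.T i j < 0 ∧ c.l j < (c.α j : EReal))) }

/-- `slack⁻(x_i)`. -/
def slackNeg (c : Config V) (i : V) : Set V :=
  { j | j ∉ c.basic ∧
      ((c.T i j < 0 ∧ (c.α j : EReal) < c.u j) ∨ (0 < c.T i j ∧ c.l j < (c.α j : EReal))) }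

/-- The `pivot(T,i,j)` operation: `x_i` leaves the basis and `x_j` enters it;
the row of `x_i` is solved for `x_j`, and the result is substituted for `x_j`
in all other rows. -/
noncomputable def pivotConfig (c : Config V) (i j : V) : Config V :=
  { c with
    basic := insert j (c.basic.erase i)
    T := fun r k =>
      if r = j then (if k = i then 1 / c.T i j else - (c.T i k / c.T i j))
      else (if k = i then c.T r j / c.T i j
            else c.T r k - c.T r j * c.T i k / c.T i j) }

/-- The `update(α, x_j, δ)` operation for a non-basic variable `x_j`. -/
noncomputable def updateConfig (c : Config V) (j : V) (δ : ℝ) : Config V :=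
  { c with
    α := fun k =>
      if k = j then c.α k + δ
      else if k ∈ c.basic then c.α k + δ * c.T k j
      else c.α k }

/-- The candidate tighter lower bound `Σ_{T i j>0} T i j * l j + Σ_{T i j<0} T i j * u j`. -/
noncomputable def derivedLower (c : Config V) (i : V) : EReal :=
  (∑ j ∈ Finset.univ.filter (fun j => j ∉ c.basic ∧ 0 < c.T i j),
      (c.T i j : EReal) * c.l j)
  + ∑ j ∈ Finset.univ.filter (fun j => j ∉ c.basic ∧ c.T i j < 0),
      (c.T i j : EReal) * c.u j

/-- The candidate tighter upper bound `Σ_{T i j>0} T i j * u j + Σ_{T i j<0} T i j * l j`. -/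
noncomputable def derivedUpper (c : Config V) (i : V) : EReal :=
  (∑ j ∈ Finset.univ.filter (fun j => j ∉ c.basic ∧ 0 < c.T i j),
      (c.T i j : EReal) * c.u j)
  + ∑ j ∈ Finset.univ.filter (fun j => j ∉ c.basic ∧ c.T i j < 0),
      (c.T i j : EReal) * c.l j

end Config

/-- A Reluplex configuration: either one of the distinguished symbols `SAT`, `UNSAT`,
or a tuple `⟨B, T, l, u, α, R⟩`. -/
inductive RConfig (V : Type*) where
  | SAT : RConfig V
  | UNSAT : RConfig V
  | node : Config V → RConfig V

/-- One application of a Reluplex derivation rule to the configuration `c`,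
producing the given list of child configurations. -/
inductive Step {V : Type*} [Fintype V] [DecidableEq V] :
    Config V → List (RConfig V) → Prop
  | pivot1 (c : Config V) (i j : V) (hi : i ∈ c.basic)
      (hlo : (c.α i : EReal) < c.l i) (hj : j ∈ c.slackPos i) :
      Step c [RConfig.node (c.pivotConfig i j)]
  | pivot2 (c : Config V) (i j : V) (hi : i ∈ c.basic)
      (hhi : c.u i < (c.α i : EReal)) (hj : j ∈ c.slackNeg i) :
      Step c [RConfig.node (c.pivotConfig i j)]
  | update (c : Config V) (j : V) (δ : ℝ) (hj : j ∉ c.basic)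
      (hviol : (c.α j : EReal) < c.l j ∨ c.u j < (c.α j : EReal))
      (hlo : c.l j ≤ ((c.α j + δ : ℝ) : EReal))
      (hhi : ((c.α j + δ : ℝ) : EReal) ≤ c.u j) :
      Step c [RConfig.node (c.updateConfig j δ)]
  | failure (c : Config V) (i : V) (hi : i ∈ c.basic)
      (h : ((c.α i : EReal) < c.l i ∧ c.slackPos i = ∅) ∨
           (c.u i < (c.α i : EReal) ∧ c.slackNeg i = ∅)) :
      Step c [RConfig.UNSAT]
  | updateB (c : Config V) (i j : V) (hR : (i, j) ∈ c.R) (hi : i ∉ c.basic)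
      (hne : c.α j ≠ max 0 (c.α i)) (hpos : 0 ≤ c.α j) :
      Step c [RConfig.node (c.updateConfig i (c.α j - c.α i))]
  | updateF (c : Config V) (i j : V) (hR : (i, j) ∈ c.R) (hj : j ∉ c.basic)
      (hne : c.α j ≠ max 0 (c.α i)) :
      Step c [RConfig.node (c.updateConfig j (max 0 (c.α i) - c.α j))]
  | pivotForRelu (c : Config V) (i j : V) (hi : i ∈ c.basic)
      (hrel : ∃ x, (i, x) ∈ c.R ∨ (x, i) ∈ c.R) (hj : j ∉ c.basic)
      (hT : c.T i j ≠ 0) :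
      Step c [RConfig.node (c.pivotConfig i j)]
  | reluSplit (c : Config V) (i j : V) (hR : (i, j) ∈ c.R)
      (hl : c.l i < 0) (hu : 0 < c.u i) :
      Step c [RConfig.node { c with u := fun k => if k = i then 0 else c.u k },
              RConfig.node { c with l := fun k => if k = i then 0 else c.l k }]
  | reluSuccess (c : Config V) (hb : c.InBounds c.α)
      (hr : ∀ p ∈ c.R, c.α p.2 = max 0 (c.α p.1)) :
      Step c [RConfig.SAT]
  | deriveLowerBound (c : Config V) (i : V) (hi : i ∈ c.basic)
      (h : c.l i < c.derivedLower i) :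
      Step c [RConfig.node { c with l := fun k => if k = i then c.derivedLower i else c.l k }]
  | deriveUpperBound (c : Config V) (i : V) (hi : i ∈ c.basic)
      (h : c.derivedUpper i < c.u i) :
      Step c [RConfig.node { c with u := fun k => if k = i then c.derivedUpper i else c.u k }]

/-- Derivation trees: trees of Reluplex configurations. -/
inductive DTree (V : Type*) where
  | leaf : RConfig V → DTree V
  | node : RConfig V → List (DTree V) → DTree V

namespace DTree

variable {V : Type*}

/-- The configuration at the root of a derivation tree. -/
def root : DTree V → RConfig V
  | DTree.leaf s => s
  | DTree.node s _ => s

/-- `Mem s t`: the configuration `s` appears (as some node) in the tree `t`. -/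
inductive Mem : RConfig V → DTree V → Prop
  | leaf (s : RConfig V) : Mem s (DTree.leaf s)
  | root (s : RConfig V) (ts : List (DTree V)) : Mem s (DTree.node s ts)
  | child {s s' : RConfig V} {t : DTree V} {ts : List (DTree V)}
      (h : Mem s t) (ht : t ∈ ts) : Mem s (DTree.node s' ts)

/-- `LeafMem s t`: the configuration `s` appears as a leaf of the tree `t`. -/
inductive LeafMem : RConfig V → DTree V → Prop
  | leaf (s : RConfig V) : LeafMem s (DTree.leaf s)
  | child {s s' : RConfig V} {t : DTree V} {ts : List (DTree V)}
      (h : LeafMem s t) (ht : t ∈ ts) : LeafMem s (DTree.node s' ts)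

/-- `Sub t t'`: `t` is a subtree of `t'`. -/
inductive Sub : DTree V → DTree V → Prop
  | refl (t : DTree V) : Sub t t
  | child {t t' : DTree V} {s : RConfig V} {ts : List (DTree V)}
      (h : Sub t t') (ht : t' ∈ ts) : Sub t (DTree.node s ts)

end DTree

/-- `Expand D D'`: `D'` is obtained from `D` by applying exactly one derivation
rule to one of the leaves of `D`. -/
inductive Expand {V : Type*} [Fintype V] [DecidableEq V] : DTree V → DTree V → Prop
  | here {c : Config V} {ts : List (RConfig V)} (h : Step c ts) :
      Expand (DTree.leaf (RConfig.node c)) (DTree.node (RConfig.node c) (ts.map DTree.leaf))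
  | child {s : RConfig V} {pre post : List (DTree V)} {t t' : DTree V}
      (h : Expand t t') :
      Expand (DTree.node s (pre ++ t :: post)) (DTree.node s (pre ++ t' :: post))

/-- `IsDerivation s0 m D`: `D 0, D 1, …, D m` is a Reluplex derivation starting
from the derivation tree consisting of the single node `s0`. -/
def IsDerivation {V : Type*} [Fintype V] [DecidableEq V]
    (s0 : Config V) (m : ℕ) (D : ℕ → DTree V) : Prop :=
  D 0 = DTree.leaf (RConfig.node s0) ∧ ∀ i < m, Expand (D i) (D (i + 1))

section AuxLemmas

variable {V : Type*} [Fintype V] [DecidableEq V]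

namespace Config

@[simp] lemma pivot_basic (c : Config V) (i j : V) :
    (c.pivotConfig i j).basic = insert j (c.basic.erase i) := rfl

lemma pivot_T_ji (c : Config V) (i j : V) :
    (c.pivotConfig i j).T j i = 1 / c.T i j := by
  simp [pivotConfig]

lemma pivot_T_jk (c : Config V) {i k : V} (j : V) (hki : k ≠ i) :
    (c.pivotConfig i j).T j k = - (c.T i k / c.T i j) := by
  simp [pivotConfig, hki]

lemma pivot_T_ri (c : Config V) {r j : V} (i : V) (hr : r ≠ j) :
    (c.pivotConfig i j).T r i = c.T r j / c.T i j := by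
  simp [pivotConfig, hr]

lemma pivot_T_rk (c : Config V) {r j k i : V} (hr : r ≠ j) (hki : k ≠ i) :
    (c.pivotConfig i j).T r k = c.T r k - c.T r j * c.T i k / c.T i j := by
  simp [pivotConfig, hr, hki]

@[simp] lemma pivot_alpha (c : Config V) (i j : V) :
    (c.pivotConfig i j).α = c.α := rfl

lemma pivot_nonbasic (c : Config V) {i j : V} (hi : i ∈ c.basic) (hj : j ∉ c.basic) :
    (Finset.univ.filter (fun k => k ∉ (c.pivotConfig i j).basic))
      = insert i ((Finset.univ.filter (fun k => k ∉ c.basic)).erase j) := by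
  have hij : i ≠ j := fun h => hj (h ▸ hi)
  ext k
  by_cases hk : k = i
  · subst hk; simp [hij, hi]
  · simp only [Finset.mem_filter, Finset.mem_univ, true_and, pivot_basic,
      Finset.mem_insert, Finset.mem_erase, hk, false_or, not_or]
    tauto

lemma pivot_row_j (c : Config V) {i j : V} (hi : i ∈ c.basic) (hj : j ∉ c.basic)
    (hT : c.T i j ≠ 0) (β : V → ℝ) :
    β j = (c.pivotConfig i j).rowSum j β ↔ β i = c.rowSum i β := by
  have hij : i ≠ j := fun h => hj (h ▸ hi)
  set N := Finset.univ.filter (fun k => k ∉ c.basic) with hN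
  have hjN : j ∈ N := by simp [hN, hj]
  have hiN : i ∉ N.erase j := by simp [hN, hi]
  set S := ∑ k ∈ N.erase j, c.T i k * β k with hS
  have h1 : (c.pivotConfig i j).rowSum j β = (β i - S) / c.T i j := by
    rw [rowSum, pivot_nonbasic c hi hj, Finset.sum_insert hiN]
    have h2 : ∑ k ∈ N.erase j, (c.pivotConfig i j).T j k * β k
        = (∑ k ∈ N.erase j, -(c.T i k * β k)) / c.T i j := by
      rw [Finset.sum_div]
      refine Finset.sum_congr rfl fun k hk => ?_
      have hki : k ≠ i := by
        rintro rfl; exact hiN hk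
      rw [c.pivot_T_jk j hki]
      ring
    rw [h2, c.pivot_T_ji, Finset.sum_neg_distrib, ← hS]
    ring
  have h3 : c.rowSum i β = c.T i j * β j + S := by
    rw [rowSum, ← hN, ← Finset.add_sum_erase _ _ hjN, hS]
  rw [h1, h3, eq_div_iff hT]
  constructor <;> intro h <;> linarith

lemma pivot_row_ne (c : Config V) {i j : V} {r : V} (hi : i ∈ c.basic) (hj : j ∉ c.basic)
    (hT : c.T i j ≠ 0) (hr : r ≠ j) (β : V → ℝ) (hβi : β i = c.rowSum i β) :
    (c.pivotConfig i j).rowSum r β = c.rowSum r β := by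
  have hij : i ≠ j := fun h => hj (h ▸ hi)
  set N := Finset.univ.filter (fun k => k ∉ c.basic) with hN
  have hjN : j ∈ N := by simp [hN, hj]
  have hiN : i ∉ N.erase j := by simp [hN, hi]
  set Si := ∑ k ∈ N.erase j, c.T i k * β k with hSi
  set Sr := ∑ k ∈ N.erase j, c.T r k * β k with hSr
  have hβi' : β i = c.T i j * β j + Si := by
    rw [hβi, rowSum, ← hN, ← Finset.add_sum_erase _ _ hjN, hSi]
  have h1 : (c.pivotConfig i j).rowSum r β
      = c.T r j / c.T i j * β i + (Sr - c.T r j / c.T i j * Si) := by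
    rw [rowSum, pivot_nonbasic c hi hj, Finset.sum_insert hiN]
    congr 1
    · rw [c.pivot_T_ri i hr]
    · have h2 : ∑ k ∈ N.erase j, (c.pivotConfig i j).T r k * β k
          = ∑ k ∈ N.erase j, (c.T r k * β k - c.T r j / c.T i j * (c.T i k * β k)) := by
        refine Finset.sum_congr rfl fun k hk => ?_
        have hki : k ≠ i := by rintro rfl; exact hiN hk
        rw [c.pivot_T_rk hr hki]
        ring
      rw [h2, Finset.sum_sub_distrib, ← Finset.mul_sum, hSi, hSr]
  have h3 : c.rowSum r β = c.T r j * β j + Sr := by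
    rw [rowSum, ← hN, ← Finset.add_sum_erase _ _ hjN, hSr]
  rw [h1, h3, hβi']
  field_simp
  ring

lemma pivot_satTab_iff (c : Config V) {i j : V} (hi : i ∈ c.basic) (hj : j ∉ c.basic)
    (hT : c.T i j ≠ 0) (β : V → ℝ) :
    c.SatTab β ↔ (c.pivotConfig i j).SatTab β := by
  constructor
  · intro h r hrb
    rw [pivot_basic, Finset.mem_insert, Finset.mem_erase] at hrb
    rcases hrb with rfl | ⟨hri, hrb⟩
    · exact (pivot_row_j c hi hj hT β).2 (h i hi)
    · have hrj : r ≠ j := fun e => hj (e ▸ hrb)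
      rw [pivot_row_ne c hi hj hT hrj β (h i hi)]
      exact h r hrb
  · intro h r hrb
    have hβi : β i = c.rowSum i β := by
      refine (pivot_row_j c hi hj hT β).1 ?_
      exact h j (by rw [pivot_basic]; exact Finset.mem_insert_self _ _)
    by_cases hri : r = i
    · subst hri; exact hβi
    · have hrj : r ≠ j := fun e => hj (e ▸ hrb)
      rw [← pivot_row_ne c hi hj hT hrj β hβi]
      exact h r (by rw [pivot_basic]
                    exact Finset.mem_insert_of_mem (Finset.mem_erase.2 ⟨hri, hrb⟩))

lemma update_satTab_iff (c : Config V) (j : V) (δ : ℝ) (β : V → ℝ) :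
    c.SatTab β ↔ (c.updateConfig j δ).SatTab β := Iff.rfl

lemma update_satTab_self (c : Config V) {j : V} (δ : ℝ) (hj : j ∉ c.basic)
    (h : c.SatTab c.α) :
    (c.updateConfig j δ).SatTab (c.updateConfig j δ).α := by
  intro r hrb
  have hrj : r ≠ j := fun e => hj (e ▸ hrb)
  set N := Finset.univ.filter (fun k => k ∉ c.basic) with hN
  have hjN : j ∈ N := by simp [hN, hj]
  have hα : (c.updateConfig j δ).α = fun k =>
      if k = j then c.α k + δ else if k ∈ c.basic then c.α k + δ * c.T k j else c.α k := rfl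
  have hrow : (c.updateConfig j δ).rowSum r (c.updateConfig j δ).α
      = c.rowSum r c.α + δ * c.T r j := by
    show ∑ k ∈ N, c.T r k * (c.updateConfig j δ).α k = _
    rw [← Finset.add_sum_erase _ _ hjN]
    have h2 : ∑ k ∈ N.erase j, c.T r k * (c.updateConfig j δ).α k
        = ∑ k ∈ N.erase j, c.T r k * c.α k := by
      refine Finset.sum_congr rfl fun k hk => ?_
      have hkj : k ≠ j := (Finset.mem_erase.1 hk).1
      have hkb : k ∉ c.basic := by
        have := (Finset.mem_erase.1 hk).2
        rw [hN] at this; simpa using this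
      rw [hα]; simp [hkj, hkb]
    rw [h2, hα]
    simp only [if_pos rfl, if_true, ite_true]
    rw [rowSum, ← hN, ← Finset.add_sum_erase _ _ hjN]
    ring
  have hrB : r ∈ c.basic := hrb
  rw [hrow, ← h r hrb, hα]
  simp only [if_neg hrj, if_pos hrB]

end Config

section StepPreserve

variable {V : Type*} [Fintype V] [DecidableEq V]

lemma step_preserve {c : Config V} {ts : List (RConfig V)} (h : Step c ts)
    {c' : Config V} (hc' : RConfig.node c' ∈ ts) :
    (∀ β, c.SatTab β ↔ c'.SatTab β) ∧ (c.SatTab c.α → c'.SatTab c'.α) := by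
  cases h with
  | pivot1 i j hi hlo hj =>
    obtain ⟨hjb, hcase⟩ := hj
    have hT : c.T i j ≠ 0 := by
      rcases hcase with ⟨h1, _⟩ | ⟨h1, _⟩ <;> [exact ne_of_gt h1; exact ne_of_lt h1]
    simp only [List.mem_singleton, RConfig.node.injEq] at hc'
    subst hc'
    exact ⟨fun β => c.pivot_satTab_iff hi hjb hT β,
      fun hs => (c.pivot_satTab_iff hi hjb hT c.α).1 hs⟩
  | pivot2 i j hi hhi hj =>
    obtain ⟨hjb, hcase⟩ := hj
    have hT : c.T i j ≠ 0 := by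
      rcases hcase with ⟨h1, _⟩ | ⟨h1, _⟩ <;> [exact ne_of_lt h1; exact ne_of_gt h1]
    simp only [List.mem_singleton, RConfig.node.injEq] at hc'
    subst hc'
    exact ⟨fun β => c.pivot_satTab_iff hi hjb hT β,
      fun hs => (c.pivot_satTab_iff hi hjb hT c.α).1 hs⟩
  | update j δ hj hviol hlo hhi =>
    simp only [List.mem_singleton, RConfig.node.injEq] at hc'
    subst hc'
    exact ⟨fun β => Iff.rfl, fun hs => c.update_satTab_self δ hj hs⟩
  | failure i hi h => simp at hc'
  | updateB i j hR hi hne hpos =>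
    simp only [List.mem_singleton, RConfig.node.injEq] at hc'
    subst hc'
    exact ⟨fun β => Iff.rfl, fun hs => c.update_satTab_self _ hi hs⟩
  | updateF i j hR hj hne =>
    simp only [List.mem_singleton, RConfig.node.injEq] at hc'
    subst hc'
    exact ⟨fun β => Iff.rfl, fun hs => c.update_satTab_self _ hj hs⟩
  | pivotForRelu i j hi hrel hj hT =>
    simp only [List.mem_singleton, RConfig.node.injEq] at hc'
    subst hc'
    exact ⟨fun β => c.pivot_satTab_iff hi hj hT β,
      fun hs => (c.pivot_satTab_iff hi hj hT c.α).1 hs⟩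
  | reluSplit i j hR hl hu =>
    simp only [List.mem_cons, List.mem_singleton, List.not_mem_nil, or_false,
      RConfig.node.injEq] at hc'
    rcases hc' with rfl | rfl <;> exact ⟨fun β => Iff.rfl, fun hs => hs⟩
  | reluSuccess hb hr => simp at hc'
  | deriveLowerBound i hi h =>
    simp only [List.mem_singleton, RConfig.node.injEq] at hc'
    subst hc'
    exact ⟨fun β => Iff.rfl, fun hs => hs⟩
  | deriveUpperBound i hi h =>
    simp only [List.mem_singleton, RConfig.node.injEq] at hc'
    subst hc'
    exact ⟨fun β => Iff.rfl, fun hs => hs⟩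

lemma expand_preserve (P : Config V → Prop)
    (hP : ∀ (c : Config V) (ts : List (RConfig V)), Step c ts → P c →
      ∀ c', RConfig.node c' ∈ ts → P c')
    {t t' : DTree V} (h : Expand t t')
    (ht : ∀ c, DTree.Mem (RConfig.node c) t → P c) :
    ∀ c, DTree.Mem (RConfig.node c) t' → P c := by
  induction h with
  | @here c ts hstep =>
    intro c' hc'
    have hc : P c := ht c (DTree.Mem.leaf _)
    cases hc' with
    | root => exact hc
    | child hm hts =>
      obtain ⟨r, hr, rfl⟩ := List.mem_map.1 hts
      cases hm
      exact hP c ts hstep hc c' hr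
  | @child s pre post t t' hexp ih =>
    intro c' hc'
    cases hc' with
    | root => exact ht c' (DTree.Mem.root _ _)
    | child hm hu =>
      rcases List.mem_append.1 hu with hu | hu
      · exact ht c' (DTree.Mem.child hm (List.mem_append.2 (Or.inl hu)))
      · rcases List.mem_cons.1 hu with rfl | hu
        · exact ih (fun c hc => ht c (DTree.Mem.child hc
            (List.mem_append.2 (Or.inr List.mem_cons_self)))) c' hm
        · exact ht c' (DTree.Mem.child hm
            (List.mem_append.2 (Or.inr (List.mem_cons_of_mem _ hu))))

end StepPreserve

end AuxLemmas

/-- Lemma 1 of the Reluplex paper. Let `D` be a derivation starting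
from the single-node tree with configuration `s0 = ⟨B₀, T₀, l₀, u₀, α₀, R₀⟩`, where
`α₀ ≡ 0`. Then for every derivation tree `D i` appearing in the derivation and every
non-distinguished node `⟨B, T, l, u, α, R⟩` appearing in `D i`:
(i) an assignment satisfies `T₀` iff it satisfies `T`; and
(ii) the assignment `α` satisfies `T`. -/
theorem reluplex_tableau_invariant {V : Type*} [Fintype V] [DecidableEq V]
    (s0 : Config V) (hα0 : s0.α = fun _ => 0)
    (m : ℕ) (D : ℕ → DTree V) (hD : IsDerivation s0 m D)
    (i : ℕ) (hi : i ≤ m) (c : Config V) (hc : DTree.Mem (RConfig.node c) (D i)) :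
    (∀ β : V → ℝ, s0.SatTab β ↔ c.SatTab β) ∧ c.SatTab c.α := by
  
  have good0 : (∀ β : V → ℝ, s0.SatTab β ↔ s0.SatTab β) ∧ s0.SatTab s0.α := by
    refine ⟨fun β => Iff.rfl, fun r hr => ?_⟩
    simp [hα0, Config.rowSum]
  have key : ∀ n ≤ m, ∀ c : Config V, DTree.Mem (RConfig.node c) (D n) →
      (∀ β : V → ℝ, s0.SatTab β ↔ c.SatTab β) ∧ c.SatTab c.α := by
    intro n
    induction n with
    | zero =>
      intro _ c hc
      rw [hD.1] at hc
      cases hc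
      exact good0
    | succ k ih =>
      intro hk c hc
      refine expand_preserve
        (fun c => (∀ β : V → ℝ, s0.SatTab β ↔ c.SatTab β) ∧ c.SatTab c.α)
        ?_ (hD.2 k (by omega)) (fun c hc => ih (by omega) c hc) c hc
      intro c ts hstep hPc c' hc'
      obtain ⟨hiff, hα⟩ := step_preserve hstep hc'
      exact ⟨fun β => (hPc.1 β).trans (hiff β), hα hPc.2⟩
  exact key i hi c hc
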